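/- arXiv:2109.10481 — 2 statements merged into one kernel-verified Lean document; each statement's English description precedes it below -/
import Mathlib

section
/- Let Z_1,...,Z_d be independent with Z_j ~ Poisson(n p_j), and set Δ_j = 1/d − p_j. Then the variance of T_n = ∑_{j=1}^d [(Z_j − n/d)² − Z_j] equals ∑_{j=1}^d [2n²/d² + 2n²Δ_j² + 4n³Δ_j²/d − 4n³Δ_j³]. -/
/-- The Poisson probability mass function with (real) mean `μ`. -/
noncomputable def poissonPdf (μ : ℝ) (k : ℕ) : ℝ :=
  Real.exp (-μ) * μ ^ k / (Nat.factorial k)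


lemma poisson_desc_shift (μ : ℝ) (r j : ℕ) :
    poissonPdf μ (j + r) * ((j + r).descFactorial r : ℝ) = μ ^ r * poissonPdf μ j := by
  have h1 : (j + r).descFactorial r = (j + 1).ascFactorial r :=
    Nat.add_descFactorial_eq_ascFactorial j r
  have h2 : (j.factorial : ℝ) * ((j + 1).ascFactorial r : ℝ) = ((j + r).factorial : ℝ) := by
    exact_mod_cast congrArg (Nat.cast : ℕ → ℝ) (Nat.factorial_mul_ascFactorial j r)
  have hjf : (j.factorial : ℝ) ≠ 0 := by positivity
  have hjrf : ((j + r).factorial : ℝ) ≠ 0 := by positivity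
  rw [h1]
  unfold poissonPdf
  rw [pow_add]
  field_simp
  rw [← h2]; ring

lemma summable_poissonPdf (μ : ℝ) : Summable (poissonPdf μ) := by
  have := (Real.summable_pow_div_factorial μ).mul_left (Real.exp (-μ))
  refine this.congr fun k => ?_
  simp [poissonPdf, mul_div_assoc]

lemma tsum_poissonPdf (μ : ℝ) : ∑' k, poissonPdf μ k = 1 := by
  have h : ∑' k : ℕ, μ ^ k / (Nat.factorial k) = Real.exp μ := by
    rw [Real.exp_eq_exp_ℝ, NormedSpace.exp_eq_tsum_div]
  calc ∑' k, poissonPdf μ k = ∑' k : ℕ, Real.exp (-μ) * (μ ^ k / (Nat.factorial k)) := by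
        apply tsum_congr; intro k; simp [poissonPdf, mul_div_assoc]
    _ = Real.exp (-μ) * Real.exp μ := by rw [tsum_mul_left, h]
    _ = 1 := by rw [← Real.exp_add]; simp

lemma desc_support (μ : ℝ) (r : ℕ) :
    ∀ k ∉ Set.range (fun j : ℕ => j + r),
      poissonPdf μ k * (k.descFactorial r : ℝ) = 0 := by
  intro k hk
  have hkr : k < r := by
    by_contra h
    exact hk ⟨k - r, Nat.sub_add_cancel (le_of_not_gt h)⟩
  rw [Nat.descFactorial_eq_zero_iff_lt.mpr hkr]
  simp

lemma add_right_inj' (r : ℕ) : Function.Injective (fun j : ℕ => j + r) :=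
  add_left_injective r

lemma summable_poisson_desc (μ : ℝ) (r : ℕ) :
    Summable (fun k : ℕ => poissonPdf μ k * (k.descFactorial r : ℝ)) := by
  rw [← (add_right_inj' r).summable_iff (desc_support μ r)]
  refine ((summable_poissonPdf μ).mul_left (μ ^ r)).congr fun j => ?_
  exact (poisson_desc_shift μ r j).symm

lemma tsum_poisson_desc (μ : ℝ) (r : ℕ) :
    ∑' k : ℕ, poissonPdf μ k * (k.descFactorial r : ℝ) = μ ^ r := by
  rw [← (add_right_inj' r).tsum_eq (f := fun k => poissonPdf μ k * (k.descFactorial r : ℝ))]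
  · calc ∑' j : ℕ, poissonPdf μ (j + r) * ((j + r).descFactorial r : ℝ)
        = ∑' j : ℕ, μ ^ r * poissonPdf μ j := tsum_congr fun j => poisson_desc_shift μ r j
      _ = μ ^ r * ∑' j, poissonPdf μ j := tsum_mul_left
      _ = μ ^ r := by rw [tsum_poissonPdf]; ring
  · intro k hk
    rcases lt_or_ge k r with h | h
    · exfalso; apply hk; simp only []; rw [Nat.descFactorial_eq_zero_iff_lt.mpr h]; simp
    · exact ⟨k - r, Nat.sub_add_cancel h⟩

lemma desc1 (k : ℕ) : (k.descFactorial 1 : ℝ) = k := by simp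

lemma desc2 (k : ℕ) : (k.descFactorial 2 : ℝ) = (k:ℝ)^2 - k := by
  rcases k with _ | m
  · simp
  · simp [Nat.descFactorial_succ]
    ring

lemma desc3 (k : ℕ) : (k.descFactorial 3 : ℝ) = (k:ℝ)^3 - 3*(k:ℝ)^2 + 2*k := by
  rcases k with _ | _ | m
  · simp
  · norm_num [Nat.descFactorial_succ]
  · simp [Nat.descFactorial_succ]
    ring

lemma desc4 (k : ℕ) : (k.descFactorial 4 : ℝ) = (k:ℝ)^4 - 6*(k:ℝ)^3 + 11*(k:ℝ)^2 - 6*k := by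
  rcases k with _ | _ | _ | m
  · simp
  · norm_num [Nat.descFactorial_succ]
  · norm_num [Nat.descFactorial_succ]
  · simp [Nat.descFactorial_succ]
    ring

lemma summable_poisson_quartic (μ c0 c1 c2 c3 c4 : ℝ) :
    Summable (fun k : ℕ => poissonPdf μ k * (c4*(k:ℝ)^4 + c3*(k:ℝ)^3 + c2*(k:ℝ)^2 + c1*k + c0)) := by
  have h := ((summable_poisson_desc μ 4).mul_left c4).add
    (((summable_poisson_desc μ 3).mul_left (c3 + 6*c4)).add
    (((summable_poisson_desc μ 2).mul_left (c2 + 3*c3 + 7*c4)).add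
    (((summable_poisson_desc μ 1).mul_left (c1 + c2 + c3 + c4)).add
    ((summable_poisson_desc μ 0).mul_left c0))))
  refine h.congr fun k => ?_
  simp only [desc1, desc2, desc3, desc4, Nat.descFactorial_zero, Nat.cast_one]
  ring

lemma tsum_poisson_quartic (μ c0 c1 c2 c3 c4 : ℝ) :
    ∑' k : ℕ, poissonPdf μ k * (c4*(k:ℝ)^4 + c3*(k:ℝ)^3 + c2*(k:ℝ)^2 + c1*k + c0)
    = c4*(μ^4+6*μ^3+7*μ^2+μ) + c3*(μ^3+3*μ^2+μ) + c2*(μ^2+μ) + c1*μ + c0 := by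
  have e : (fun k : ℕ => poissonPdf μ k * (c4*(k:ℝ)^4 + c3*(k:ℝ)^3 + c2*(k:ℝ)^2 + c1*k + c0))
      = fun k : ℕ => c4 * (poissonPdf μ k * (k.descFactorial 4 : ℝ))
        + ((c3 + 6*c4) * (poissonPdf μ k * (k.descFactorial 3 : ℝ))
        + ((c2 + 3*c3 + 7*c4) * (poissonPdf μ k * (k.descFactorial 2 : ℝ))
        + ((c1 + c2 + c3 + c4) * (poissonPdf μ k * (k.descFactorial 1 : ℝ))
        + c0 * (poissonPdf μ k * (k.descFactorial 0 : ℝ))))) := by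
    funext k
    simp only [desc1, desc2, desc3, desc4, Nat.descFactorial_zero, Nat.cast_one]
    ring
  rw [e]
  rw [Summable.tsum_add ((summable_poisson_desc μ 4).mul_left _)
    (((summable_poisson_desc μ 3).mul_left _).add
    (((summable_poisson_desc μ 2).mul_left _).add
    (((summable_poisson_desc μ 1).mul_left _).add
    ((summable_poisson_desc μ 0).mul_left _))))]
  rw [Summable.tsum_add ((summable_poisson_desc μ 3).mul_left _)
    (((summable_poisson_desc μ 2).mul_left _).add
    (((summable_poisson_desc μ 1).mul_left _).add
    ((summable_poisson_desc μ 0).mul_left _)))]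
  rw [Summable.tsum_add ((summable_poisson_desc μ 2).mul_left _)
    (((summable_poisson_desc μ 1).mul_left _).add
    ((summable_poisson_desc μ 0).mul_left _))]
  rw [Summable.tsum_add ((summable_poisson_desc μ 1).mul_left _)
    ((summable_poisson_desc μ 0).mul_left _)]
  rw [tsum_mul_left, tsum_mul_left, tsum_mul_left, tsum_mul_left, tsum_mul_left,
    tsum_poisson_desc, tsum_poisson_desc, tsum_poisson_desc, tsum_poisson_desc, tsum_poisson_desc]
  ring

lemma summable_qGG (μ a m1 m2 : ℝ) :
    Summable fun k : ℕ => poissonPdf μ k *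
      (((((k:ℝ) - a)^2 - k) - m1) * ((((k:ℝ) - a)^2 - k) - m2)) := by
  refine (summable_poisson_quartic μ ((a^2 - m1) * (a^2 - m2))
    (-(2*a+1)*((a^2 - m1) + (a^2 - m2)))
    ((2*a+1)^2 + (a^2 - m1) + (a^2 - m2)) (-(2*(2*a+1))) 1).congr fun k => ?_
  ring

lemma summable_qG (μ a m : ℝ) :
    Summable fun k : ℕ => poissonPdf μ k * ((((k:ℝ) - a)^2 - k) - m) := by
  refine (summable_poisson_quartic μ (a^2 - m) (-(2*a+1)) 1 0 0).congr fun k => ?_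
  ring

lemma tsum_qF (μ a : ℝ) :
    ∑' k : ℕ, poissonPdf μ k * (((k:ℝ) - a)^2 - k) = (μ - a)^2 := by
  have e : ∀ k : ℕ, poissonPdf μ k * (((k:ℝ) - a)^2 - k)
      = poissonPdf μ k * (0*(k:ℝ)^4 + 0*(k:ℝ)^3 + 1*(k:ℝ)^2 + (-(2*a+1))*k + a^2) :=
    fun k => by ring
  rw [tsum_congr e, tsum_poisson_quartic]
  ring

lemma tsum_qG (μ a : ℝ) :
    ∑' k : ℕ, poissonPdf μ k * ((((k:ℝ) - a)^2 - k) - (μ - a)^2) = 0 := by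
  have e : ∀ k : ℕ, poissonPdf μ k * ((((k:ℝ) - a)^2 - k) - (μ - a)^2)
      = poissonPdf μ k * (0*(k:ℝ)^4 + 0*(k:ℝ)^3 + 1*(k:ℝ)^2 + (-(2*a+1))*k
          + (a^2 - (μ - a)^2)) :=
    fun k => by ring
  rw [tsum_congr e, tsum_poisson_quartic]
  ring

lemma tsum_qG2 (μ a : ℝ) :
    ∑' k : ℕ, poissonPdf μ k *
      (((((k:ℝ) - a)^2 - k) - (μ - a)^2) * ((((k:ℝ) - a)^2 - k) - (μ - a)^2))
    = 4*μ^3 + 2*μ^2 - 8*a*μ^2 + 4*a^2*μ := by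
  have e : ∀ k : ℕ, poissonPdf μ k *
      (((((k:ℝ) - a)^2 - k) - (μ - a)^2) * ((((k:ℝ) - a)^2 - k) - (μ - a)^2))
      = poissonPdf μ k * (1*(k:ℝ)^4 + (-(2*(2*a+1)))*(k:ℝ)^3
          + ((2*a+1)^2 + 2*(a^2 - (μ - a)^2))*(k:ℝ)^2
          + (-(2*(2*a+1))*(a^2 - (μ - a)^2))*k + (a^2 - (μ - a)^2)^2) :=
    fun k => by ring
  rw [tsum_congr e, tsum_poisson_quartic]
  ring

lemma pi_prod_tsum {d : ℕ} (g : Fin d → ℕ → ℝ) (hg : ∀ j, Summable (g j)) :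
    Summable (fun z : Fin d → ℕ => ∏ j, g j (z j)) ∧
    ∑' z : Fin d → ℕ, ∏ j, g j (z j) = ∏ j, ∑' k, g j k := by
  induction d with
  | zero =>
    constructor
    · exact Summable.of_finite
    · simp only [Finset.univ_eq_empty, Finset.prod_empty]
      exact tsum_eq_single default fun b hb => absurd (Subsingleton.elim b default) hb
  | succ d ih =>
    set e : ℕ × (Fin d → ℕ) ≃ (Fin (d + 1) → ℕ) := Fin.consEquiv (fun _ => ℕ) with he
    have key : ∀ p : ℕ × (Fin d → ℕ),
        (∏ j, g j (e p j)) = g 0 p.1 * ∏ j : Fin d, g j.succ (p.2 j) := by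
      intro p
      rw [Fin.prod_univ_succ]
      simp [he, Fin.consEquiv]
    obtain ⟨hB, hBt⟩ := ih (fun j => g j.succ) (fun j => hg j.succ)
    obtain ⟨hB', _⟩ := ih (fun j k => |g j.succ k|) (fun j => (hg j.succ).abs)
    have hP : Summable (fun p : ℕ × (Fin d → ℕ) => g 0 p.1 * ∏ j : Fin d, g j.succ (p.2 j)) := by
      apply summable_mul_of_summable_norm (f := g 0)
        (g := fun y : Fin d → ℕ => ∏ j : Fin d, g j.succ (y j))
      · exact ((hg 0).abs).congr fun k => (Real.norm_eq_abs _).symm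
      · refine hB'.congr fun y => ?_
        rw [Real.norm_eq_abs, Finset.abs_prod]
    have hsum : Summable (fun z : Fin (d + 1) → ℕ => ∏ j, g j (z j)) := by
      rw [← e.summable_iff]
      exact hP.congr fun p => (key p).symm
    refine ⟨hsum, ?_⟩
    rw [← e.tsum_eq, tsum_congr key,
      Summable.tsum_prod' hP (fun k => hB.mul_left (g 0 k))]
    simp_rw [tsum_mul_left]
    rw [tsum_mul_right, hBt, Fin.prod_univ_succ]

/-- The statistic `T_n(z) = ∑_j [(z_j − n/d)² − z_j]`. -/
noncomputable def chiSqStat (d : ℕ) (n : ℝ) (z : Fin d → ℕ) : ℝ :=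
  ∑ j, (((z j : ℝ) - n / d) ^ 2 - (z j : ℝ))

/-- For independent `Z_j ~ Poisson(n p_j)` and `Δ_j = 1/d − p_j`, the
variance of `T_n = ∑_j [(Z_j − n/d)² − Z_j]` (computed under the joint law, i.e. the
product of the Poisson laws) equals `∑_j [2n²/d² + 2n²Δ_j² + 4n³Δ_j²/d − 4n³Δ_j³]`. -/
theorem stmt_5 (d : ℕ) (hd : 0 < d) (n : ℝ) (hn : 0 < n)
    (p : Fin d → ℝ) (hp0 : ∀ j, 0 ≤ p j) (hp1 : ∑ j, p j = 1) :
    (∑' z : Fin d → ℕ, (∏ j, poissonPdf (n * p j) (z j)) *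
        (chiSqStat d n z -
          ∑' w : Fin d → ℕ, (∏ j, poissonPdf (n * p j) (w j)) * chiSqStat d n w) ^ 2)
      = ∑ j, (2 * n ^ 2 / d ^ 2 + 2 * n ^ 2 * (1 / d - p j) ^ 2
          + 4 * n ^ 3 * (1 / d - p j) ^ 2 / d - 4 * n ^ 3 * (1 / d - p j) ^ 3) := by
  classical
  have hd' : (d:ℝ) ≠ 0 := Nat.cast_ne_zero.mpr hd.ne'
  have hQsum : ∀ l : Fin d, Summable (poissonPdf (n * p l)) := fun l => summable_poissonPdf _
  -- Step 1: the mean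
  have hmean : (∑' w : Fin d → ℕ, (∏ j, poissonPdf (n * p j) (w j)) * chiSqStat d n w)
      = ∑ i, (n * p i - n / d)^2 := by
    have hsum : ∀ i l : Fin d, Summable (fun k : ℕ =>
        poissonPdf (n * p l) k * (if l = i then ((k:ℝ) - n / d)^2 - k else 1)) := by
      intro i l
      by_cases hl : l = i
      · simp only [if_pos hl]
        exact (summable_qG (n * p l) (n / d) 0).congr fun k => by ring
      · simp only [if_neg hl]
        exact (hQsum l).congr fun k => by ring
    have hpt : ∀ w : Fin d → ℕ, (∏ j, poissonPdf (n * p j) (w j)) * chiSqStat d n w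
        = ∑ i, ∏ l, (poissonPdf (n * p l) (w l) *
            (if l = i then ((w l : ℝ) - n / d)^2 - (w l : ℝ) else 1)) := by
      intro w
      have h2 : ∀ i : Fin d, (∏ l, (poissonPdf (n * p l) (w l) *
          (if l = i then ((w l : ℝ) - n / d)^2 - (w l : ℝ) else 1)))
          = (∏ l, poissonPdf (n * p l) (w l)) * (((w i : ℝ) - n / d)^2 - (w i : ℝ)) := by
        intro i
        rw [Finset.prod_mul_distrib,
          Finset.prod_ite_eq' Finset.univ i (fun l => ((w l : ℝ) - n / d)^2 - (w l : ℝ))]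
        simp
      rw [Finset.sum_congr rfl fun i _ => h2 i, ← Finset.mul_sum]
      rfl
    rw [tsum_congr hpt, Summable.tsum_finsetSum (fun i _ => (pi_prod_tsum _ (hsum i)).1)]
    refine Finset.sum_congr rfl fun i _ => ?_
    rw [(pi_prod_tsum _ (hsum i)).2]
    have hval : ∀ l, (∑' k : ℕ, poissonPdf (n * p l) k *
        (if l = i then ((k:ℝ) - n / d)^2 - k else 1))
        = if l = i then (n * p i - n / d)^2 else 1 := by
      intro l
      by_cases hl : l = i
      · subst hl
        simp only [eq_self_iff_true, if_true]
        exact tsum_qF (n * p l) (n / d)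
      · simp only [if_neg hl]
        simp_rw [mul_one]
        exact tsum_poissonPdf _
    rw [Finset.prod_congr rfl fun l _ => hval l,
      Finset.prod_ite_eq' Finset.univ i (fun _ => (n * p i - n / d)^2)]
    simp
  rw [hmean]
  -- Step 2: the variance
  have hHsum : ∀ i j l : Fin d, Summable (fun k : ℕ =>
      poissonPdf (n * p l) k *
        ((if l = i then (((k:ℝ) - n / d)^2 - k) - (n * p i - n / d)^2 else 1) *
         (if l = j then (((k:ℝ) - n / d)^2 - k) - (n * p j - n / d)^2 else 1))) := by
    intro i j l
    by_cases hi : l = i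
    · by_cases hj : l = j
      · simp only [if_pos hi, if_pos hj]
        exact summable_qGG _ _ _ _
      · simp only [if_pos hi, if_neg hj]
        exact (summable_qG (n * p l) (n / d) ((n * p i - n / d)^2)).congr fun k => by ring
    · by_cases hj : l = j
      · simp only [if_neg hi, if_pos hj]
        exact (summable_qG (n * p l) (n / d) ((n * p j - n / d)^2)).congr fun k => by ring
      · simp only [if_neg hi, if_neg hj]
        exact (hQsum l).congr fun k => by ring
  have hpt2 : ∀ z : Fin d → ℕ,
      (∏ j, poissonPdf (n * p j) (z j)) * (chiSqStat d n z - ∑ i, (n * p i - n / d)^2)^2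
      = ∑ i, ∑ j, ∏ l, (poissonPdf (n * p l) (z l) *
          ((if l = i then (((z l:ℝ) - n / d)^2 - z l) - (n * p i - n / d)^2 else 1) *
           (if l = j then (((z l:ℝ) - n / d)^2 - z l) - (n * p j - n / d)^2 else 1))) := by
    intro z
    have e1 : chiSqStat d n z - ∑ i, (n * p i - n / d)^2
        = ∑ i, ((((z i:ℝ) - n / d)^2 - z i) - (n * p i - n / d)^2) := by
      unfold chiSqStat
      rw [← Finset.sum_sub_distrib]
    rw [e1, sq, Finset.sum_mul_sum, Finset.mul_sum]
    refine Finset.sum_congr rfl fun i _ => ?_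
    rw [Finset.mul_sum]
    refine Finset.sum_congr rfl fun j _ => ?_
    rw [Finset.prod_mul_distrib, Finset.prod_mul_distrib,
      Finset.prod_ite_eq' Finset.univ i
        (fun l => (((z l:ℝ) - n / d)^2 - z l) - (n * p i - n / d)^2),
      Finset.prod_ite_eq' Finset.univ j
        (fun l => (((z l:ℝ) - n / d)^2 - z l) - (n * p j - n / d)^2)]
    simp only [Finset.mem_univ, if_true]

  have hL : (∑' z : Fin d → ℕ, (∏ j, poissonPdf (n * p j) (z j)) *
        (chiSqStat d n z - ∑ i, (n * p i - n / d)^2)^2)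
      = ∑ i, (4*(n * p i)^3 + 2*(n * p i)^2 - 8*(n / d)*(n * p i)^2
          + 4*(n / d)^2*(n * p i)) := by
    rw [tsum_congr hpt2,
      Summable.tsum_finsetSum (fun i _ => summable_sum fun j _ => (pi_prod_tsum _ (hHsum i j)).1)]
    refine Finset.sum_congr rfl fun i _ => ?_
    rw [Summable.tsum_finsetSum (fun j _ => (pi_prod_tsum _ (hHsum i j)).1),
      Finset.sum_congr rfl fun j _ => (pi_prod_tsum _ (hHsum i j)).2]
    rw [Finset.sum_eq_single_of_mem i (Finset.mem_univ i) ?_]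
    · -- diagonal term
      have hval2 : ∀ l, (∑' k : ℕ, poissonPdf (n * p l) k *
          ((if l = i then (((k:ℝ) - n / d)^2 - k) - (n * p i - n / d)^2 else 1) *
           (if l = i then (((k:ℝ) - n / d)^2 - k) - (n * p i - n / d)^2 else 1)))
          = if l = i then (4*(n * p i)^3 + 2*(n * p i)^2 - 8*(n / d)*(n * p i)^2
              + 4*(n / d)^2*(n * p i)) else 1 := by
        intro l
        by_cases hl : l = i
        · subst hl
          simp only [eq_self_iff_true, if_true]
          exact tsum_qG2 (n * p l) (n / d)
        · simp only [if_neg hl]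
          simp_rw [mul_one]
          exact tsum_poissonPdf _
      rw [Finset.prod_congr rfl fun l _ => hval2 l,
        Finset.prod_ite_eq' Finset.univ i (fun _ => (4*(n * p i)^3 + 2*(n * p i)^2
          - 8*(n / d)*(n * p i)^2 + 4*(n / d)^2*(n * p i)))]
      simp
    · -- off-diagonal terms vanish
      intro j _ hj
      apply Finset.prod_eq_zero (Finset.mem_univ i)
      simp only [eq_self_iff_true, if_true, if_neg (Ne.symm hj)]
      simp_rw [mul_one]
      exact tsum_qG (n * p i) (n / d)
  rw [hL]
  -- Step 3: algebra
  have hsum0 : ∑ i : Fin d, (1/(d:ℝ) - p i) = 0 := by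
    rw [Finset.sum_sub_distrib, hp1, Finset.sum_const, Finset.card_univ, Fintype.card_fin,
      nsmul_eq_mul]
    field_simp
    ring
  calc ∑ i, (4*(n * p i)^3 + 2*(n * p i)^2 - 8*(n / d)*(n * p i)^2 + 4*(n / d)^2*(n * p i))
      = ∑ i, ((2 * n ^ 2 / d ^ 2 + 2 * n ^ 2 * (1 / d - p i) ^ 2
          + 4 * n ^ 3 * (1 / d - p i) ^ 2 / d - 4 * n ^ 3 * (1 / d - p i) ^ 3)
          - (4*n^2/d) * (1/(d:ℝ) - p i)) := by
        refine Finset.sum_congr rfl fun i _ => ?_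
        field_simp
        ring
    _ = (∑ i, (2 * n ^ 2 / d ^ 2 + 2 * n ^ 2 * (1 / d - p i) ^ 2
          + 4 * n ^ 3 * (1 / d - p i) ^ 2 / d - 4 * n ^ 3 * (1 / d - p i) ^ 3))
          - (4*n^2/d) * ∑ i : Fin d, (1/(d:ℝ) - p i) := by
        rw [Finset.sum_sub_distrib, Finset.mul_sum]
    _ = _ := by rw [hsum0]; ring
end

section
/- Fix r > 0 and for j ∈ [d] let β_j = √(1/(d p_j))·(√r + ε̄_j) and γ_j = √r + ε̄_j, where ε̄_j ≥ 0 and p_j > 0 satisfy sup_j |d p_j − 1| = O(√(d log d / n)). If n ≫ d log³ d as d → ∞, then sup_{j∈[d]} |Φ̄(β_j √(2 log d)) / Φ̄(γ_j √(2 log d)) − 1| → 0, where Φ̄ is the standard normal upper tail. -/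
open Filter MeasureTheory Set Topology

/-- The standard normal density `φ`. -/
noncomputable def stdGaussianPdf (x : ℝ) : ℝ :=
  Real.exp (-x ^ 2 / 2) / Real.sqrt (2 * Real.pi)

/-- The standard normal upper tail `Φ̄(x) = ∫_x^∞ φ(t) dt`. -/
noncomputable def normalTail (x : ℝ) : ℝ :=
  ∫ t in Set.Ioi x, stdGaussianPdf t

lemma phi_pos (x : ℝ) : 0 < stdGaussianPdf x := by
  unfold stdGaussianPdf
  positivity

lemma phi_integrable : Integrable stdGaussianPdf := by
  have h : Integrable (fun x : ℝ => Real.exp (-(1/2) * x ^ 2)) := integrable_exp_neg_mul_sq (by norm_num)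
  have := h.div_const (Real.sqrt (2 * Real.pi))
  refine this.congr (Filter.Eventually.of_forall fun x => ?_)
  unfold stdGaussianPdf
  ring_nf

lemma phi_anti {x y : ℝ} (hx : 0 ≤ x) (hxy : x ≤ y) : stdGaussianPdf y ≤ stdGaussianPdf x := by
  unfold stdGaussianPdf
  have h2 : Real.exp (-y ^ 2 / 2) ≤ Real.exp (-x ^ 2 / 2) :=
    Real.exp_le_exp.mpr (by nlinarith)
  gcongr

lemma tail_sub_eq {a b : ℝ} (hab : a ≤ b) :
    normalTail a - normalTail b = ∫ t in Set.Ioc a b, stdGaussianPdf t := by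
  unfold normalTail
  have h : Set.Ioc a b ∪ Set.Ioi b = Set.Ioi a := Set.Ioc_union_Ioi_eq_Ioi hab
  have h2 := setIntegral_union (f := stdGaussianPdf) (μ := volume) (s := Set.Ioc a b)
    (t := Set.Ioi b) (Set.Ioc_disjoint_Ioi le_rfl) measurableSet_Ioi
    phi_integrable.integrableOn phi_integrable.integrableOn
  rw [h] at h2
  linarith

lemma tail_anti {a b : ℝ} (hab : a ≤ b) : normalTail b ≤ normalTail a := by
  have := tail_sub_eq hab
  have h2 : 0 ≤ ∫ t in Set.Ioc a b, stdGaussianPdf t :=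
    setIntegral_nonneg measurableSet_Ioc (fun x _ => (phi_pos x).le)
  linarith

lemma tail_sub_le {a b : ℝ} (ha : 0 ≤ a) (hab : a ≤ b) :
    normalTail a - normalTail b ≤ (b - a) * stdGaussianPdf a := by
  rw [tail_sub_eq hab]
  have h := norm_setIntegral_le_of_norm_le_const (μ := volume) (s := Set.Ioc a b)
    (f := stdGaussianPdf) (C := stdGaussianPdf a)
    (by rw [Real.volume_Ioc]; exact ENNReal.ofReal_lt_top)
    (fun x hx => by
      rw [Real.norm_eq_abs, abs_of_pos (phi_pos x)]
      exact phi_anti ha hx.1.le)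
  rw [Real.volume_real_Ioc_of_le hab] at h
  calc ∫ t in Set.Ioc a b, stdGaussianPdf t ≤ ‖∫ t in Set.Ioc a b, stdGaussianPdf t‖ := le_abs_self _
    _ ≤ stdGaussianPdf a * (b - a) := h
    _ = (b - a) * stdGaussianPdf a := mul_comm _ _

lemma tail_lower {x : ℝ} (hx : 1 ≤ x) :
    Real.exp (-2) * stdGaussianPdf x / x ≤ normalTail x := by
  have hx0 : 0 < x := by linarith
  have hinv : 0 < 1 / x := by positivity
  have h1 : (∫ t in Set.Ioc x (x + 1/x), stdGaussianPdf t) ≤ normalTail x := by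
    apply setIntegral_mono_set phi_integrable.integrableOn
      (Filter.Eventually.of_forall fun t => (phi_pos t).le)
    exact Filter.Eventually.of_forall fun t ht => ht.1
  have h2 : stdGaussianPdf (x + 1/x) * (1/x) ≤ ∫ t in Set.Ioc x (x + 1/x), stdGaussianPdf t := by
    have h := setIntegral_ge_of_const_le_real (μ := volume) (s := Set.Ioc x (x + 1/x))
      (f := stdGaussianPdf) (c := stdGaussianPdf (x + 1/x)) measurableSet_Ioc
      (by rw [Real.volume_Ioc]; exact ENNReal.ofReal_ne_top)
      (fun t ht => phi_anti (le_trans hx0.le ht.1.le) ht.2) phi_integrable.integrableOn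
    rw [Real.volume_real_Ioc_of_le (by linarith),
      show x + 1/x - x = 1/x by ring] at h
    exact h
  have h3 : Real.exp (-2) * stdGaussianPdf x ≤ stdGaussianPdf (x + 1/x) := by
    have key : Real.exp (-2) * Real.exp (-x^2/2) ≤ Real.exp (-(x + 1/x)^2/2) := by
      rw [← Real.exp_add]
      apply Real.exp_le_exp.mpr
      have h4 : (x + 1/x)^2 = x^2 + 2 + (1/x)^2 := by field_simp; ring
      have h5 : (1/x)^2 ≤ 1 := by
        rw [div_pow, one_pow, div_le_one (by positivity)]; nlinarith
      nlinarith
    unfold stdGaussianPdf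
    rw [← mul_div_assoc]
    gcongr
  calc Real.exp (-2) * stdGaussianPdf x / x
      = (Real.exp (-2) * stdGaussianPdf x) * (1/x) := by ring
    _ ≤ stdGaussianPdf (x + 1/x) * (1/x) := mul_le_mul_of_nonneg_right h3 hinv.le
    _ ≤ _ := le_trans h2 h1

lemma one_le_of_one_le_sq {x : ℝ} (h0 : 0 < x) (h1 : 1 ≤ x ^ 2) : 1 ≤ x := by
  nlinarith

lemma tail_pos {x : ℝ} (hx : 1 ≤ x) : 0 < normalTail x :=
  lt_of_lt_of_le (by have := phi_pos x; positivity) (tail_lower hx)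

lemma ratio_bound {a b : ℝ} (ha : 0 < a) (hb : 1 ≤ b) :
    |normalTail a / normalTail b - 1| ≤
      |a - b| * b * Real.exp 2 * Real.exp (|b ^ 2 - a ^ 2| / 2) := by
  have hb0 : 0 < b := lt_of_lt_of_le one_pos hb
  have hlow : Real.exp (-2) * stdGaussianPdf b / b ≤ normalTail b := tail_lower hb
  have hΦb : 0 < normalTail b := tail_pos hb
  set m := min a b with hm
  have hm0 : 0 < m := lt_min ha hb0
  have hnum : |normalTail a - normalTail b| ≤ |a - b| * stdGaussianPdf m := by
    rcases le_total a b with h | h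
    · rw [abs_of_nonneg (by linarith [tail_anti h]), show m = a from min_eq_left h,
        abs_sub_comm, abs_of_nonneg (by linarith)]
      exact tail_sub_le ha.le h
    · rw [abs_sub_comm, abs_of_nonneg (by linarith [tail_anti h]),
        show m = b from min_eq_right h, abs_of_nonneg (by linarith)]
      exact tail_sub_le hb0.le h
  have hmb : b ^ 2 - m ^ 2 ≤ |b ^ 2 - a ^ 2| := by
    rcases le_total a b with h | h
    · rw [show m = a from min_eq_left h]; exact le_abs_self _
    · rw [show m = b from min_eq_right h, sub_self]; exact abs_nonneg _
  have hφm : stdGaussianPdf m ≤ stdGaussianPdf b * Real.exp (|b ^ 2 - a ^ 2| / 2) := by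
    unfold stdGaussianPdf
    rw [div_mul_eq_mul_div, ← Real.exp_add]
    have h2 : Real.exp (-m ^ 2 / 2) ≤ Real.exp (-b ^ 2 / 2 + |b ^ 2 - a ^ 2| / 2) :=
      Real.exp_le_exp.mpr (by linarith)
    gcongr
  have hdiv : stdGaussianPdf m / stdGaussianPdf b ≤ Real.exp (|b ^ 2 - a ^ 2| / 2) :=
    (div_le_iff₀ (phi_pos b)).mpr (by linarith [hφm])
  have key : normalTail a / normalTail b - 1 = (normalTail a - normalTail b) / normalTail b := by
    field_simp
  rw [key, abs_div, abs_of_pos hΦb]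
  calc |normalTail a - normalTail b| / normalTail b
      ≤ (|a - b| * stdGaussianPdf m) / (Real.exp (-2) * stdGaussianPdf b / b) :=
        div_le_div₀ (by have := phi_pos m; positivity) hnum
          (by have := phi_pos b; positivity) hlow
    _ = |a - b| * b * Real.exp 2 * (stdGaussianPdf m / stdGaussianPdf b) := by
        rw [Real.exp_neg]
        have h1 := (phi_pos b).ne'
        field_simp
    _ ≤ |a - b| * b * Real.exp 2 * Real.exp (|b ^ 2 - a ^ 2| / 2) := by
        apply mul_le_mul_of_nonneg_left hdiv
        have : (0:ℝ) ≤ |a - b| := abs_nonneg _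
        positivity


set_option maxHeartbeats 1000000 in
/-- With `β_j = √(1/(d p_j))(√r + ε̄_j)`, `γ_j = √r + ε̄_j`,
`0 ≤ ε̄_j ≤ 1`, `sup_j |d p_j − 1| = O(√(d log d / n))`, and `n ≫ d log³ d`, the ratio
`Φ̄(β_j √(2 log d)) / Φ̄(γ_j √(2 log d))` tends to 1 uniformly in `j ∈ [d]`. -/
theorem stmt_11 (r : ℝ) (hr : 0 < r) (n : ℕ → ℝ)
    (p : (d : ℕ) → Fin d → ℝ) (εb : (d : ℕ) → Fin d → ℝ)
    (hp : ∀ d j, 0 < p d j) (hεb0 : ∀ d j, 0 ≤ εb d j) (hεb1 : ∀ d j, εb d j ≤ 1)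
    (C : ℝ)
    (hC : ∀ d : ℕ, ∀ j : Fin d,
      |(d : ℝ) * p d j - 1| ≤ C * Real.sqrt ((d : ℝ) * Real.log d / n d))
    (hn : Tendsto (fun d : ℕ => n d / ((d : ℝ) * (Real.log d) ^ 3)) atTop atTop) :
    ∀ δ > (0 : ℝ), ∀ᶠ d : ℕ in atTop, ∀ j : Fin d,
      |normalTail (Real.sqrt (1 / ((d : ℝ) * p d j)) * (Real.sqrt r + εb d j) *
            Real.sqrt (2 * Real.log d)) /
          normalTail ((Real.sqrt r + εb d j) * Real.sqrt (2 * Real.log d)) - 1| < δ := by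
  intro δ hδ
  set K : ℝ := 2 * (Real.sqrt r + 1) ^ 2 with hKdef
  have hKpos : 0 < K := by positivity
  set ε : ℝ := min (δ / (2 * K * Real.exp 3)) (min (1 / K) (1 / 2)) with hεdef
  have hεpos : 0 < ε := lt_min (by positivity) (lt_min (by positivity) (by norm_num))
  have hεδ : ε ≤ δ / (2 * K * Real.exp 3) := min_le_left _ _
  have hεK : ε ≤ 1 / K := le_trans (min_le_right _ _) (min_le_left _ _)
  have hε12 : ε ≤ 1 / 2 := le_trans (min_le_right _ _) (min_le_right _ _)
  have hlog : Tendsto (fun d : ℕ => Real.log d) atTop atTop :=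
    Real.tendsto_log_atTop.comp tendsto_natCast_atTop_atTop
  have ev1 : ∀ᶠ d : ℕ in atTop, 1 ≤ Real.log d := hlog.eventually_ge_atTop 1
  have ev2 : ∀ᶠ d : ℕ in atTop, 1 / (2 * r) ≤ Real.log d := hlog.eventually_ge_atTop _
  have ev3 : ∀ᶠ d : ℕ in atTop, (1 : ℝ) ≤ n d / ((d : ℝ) * (Real.log d) ^ 3) :=
    hn.eventually_ge_atTop 1
  have ev4 : ∀ᶠ d : ℕ in atTop, (3 : ℕ) ≤ d := eventually_ge_atTop 3
  have hv0 : Tendsto (fun d : ℕ => (d : ℝ) * (Real.log d) ^ 3 / n d) atTop (𝓝 0) := by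
    have h := tendsto_inv_atTop_zero.comp hn
    apply h.congr'
    filter_upwards [ev1, ev3, ev4] with d h1 h3 h4
    simp only [Function.comp_apply]
    rw [inv_div]
  have hv : Tendsto (fun d : ℕ => C * Real.sqrt ((d : ℝ) * (Real.log d) ^ 3 / n d))
      atTop (𝓝 0) := by
    have h := (Real.continuous_sqrt.tendsto' 0 0 (by simp)).comp hv0
    have h2 := h.const_mul C
    simpa using h2
  have ev5 : ∀ᶠ d : ℕ in atTop,
      C * Real.sqrt ((d : ℝ) * (Real.log d) ^ 3 / n d) < ε :=
    hv.eventually (eventually_lt_nhds hεpos)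
  filter_upwards [ev1, ev2, ev3, ev4, ev5] with d hL1 hL2 hbig hd3 hεd
  intro j
  set L : ℝ := Real.log d with hLdef
  have hL0 : 0 < L := lt_of_lt_of_le one_pos hL1
  have hd0 : (0 : ℝ) < d := by
    have : (3 : ℝ) ≤ (d : ℝ) := by exact_mod_cast hd3
    linarith
  have hn0 : 0 < n d := by
    have hx : 0 < (d : ℝ) * L ^ 3 := by positivity
    rw [le_div_iff₀ hx] at hbig
    linarith
  set s : ℝ := Real.sqrt (1 / ((d : ℝ) * p d j)) with hsdef
  set γ : ℝ := Real.sqrt r + εb d j with hγdef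
  set t : ℝ := Real.sqrt (2 * L) with htdef
  set η : ℝ := C * Real.sqrt ((d : ℝ) * L / n d) with hηdef
  have hη : |(d : ℝ) * p d j - 1| ≤ η := hC d j
  have hη0 : 0 ≤ η := (abs_nonneg _).trans hη
  have hu_eq : η * L = C * Real.sqrt ((d : ℝ) * L ^ 3 / n d) := by
    rw [hηdef, mul_assoc]
    congr 1
    rw [show (d : ℝ) * L ^ 3 / n d = ((d : ℝ) * L / n d) * L ^ 2 from by ring,
      Real.sqrt_mul (by positivity), Real.sqrt_sq hL0.le]
  have hu : η * L < ε := by rw [hu_eq]; exact hεd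
  have hη12 : η ≤ 1 / 2 := by
    have h1 : η ≤ η * L := le_mul_of_one_le_right hη0 hL1
    linarith
  have hdp : 0 < (d : ℝ) * p d j := mul_pos hd0 (hp d j)
  have hdp2 : 1 / 2 ≤ (d : ℝ) * p d j := by
    have h := abs_le.1 hη
    linarith [h.1]
  have hs2 : s ^ 2 = 1 / ((d : ℝ) * p d j) := Real.sq_sqrt (by positivity)
  have hs0 : 0 < s := Real.sqrt_pos.mpr (by positivity)
  have hγl : Real.sqrt r ≤ γ := le_add_of_nonneg_right (hεb0 d j)
  have hγu : γ ≤ Real.sqrt r + 1 := by have := hεb1 d j; rw [hγdef]; linarith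
  have hγ0 : 0 < γ := lt_of_lt_of_le (Real.sqrt_pos.mpr hr) hγl
  have ht2 : t ^ 2 = 2 * L := Real.sq_sqrt (by positivity)
  have ht0 : 0 < t := Real.sqrt_pos.mpr (by positivity)
  clear_value K ε L s γ t η
  have hs2d : |s ^ 2 - 1| ≤ 2 * η := by
    rw [hs2, show 1 / ((d : ℝ) * p d j) - 1 = (1 - (d : ℝ) * p d j) / ((d : ℝ) * p d j) from
      by rw [div_sub_one hdp.ne'], abs_div, abs_of_pos hdp, abs_sub_comm, div_le_iff₀ hdp]
    nlinarith
  have hs1d : |s - 1| ≤ 2 * η := by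
    rcases le_total s 1 with h1 | h1
    · rw [abs_of_nonpos (by linarith)]
      have h2 : |s ^ 2 - 1| = 1 - s ^ 2 := by
        rw [abs_sub_comm, abs_of_nonneg (by nlinarith)]
      nlinarith
    · rw [abs_of_nonneg (by linarith)]
      have h2 : |s ^ 2 - 1| = s ^ 2 - 1 := abs_of_nonneg (by nlinarith)
      nlinarith
  have hb0 : 0 < γ * t := mul_pos hγ0 ht0
  have hb2 : (γ * t) ^ 2 = γ ^ 2 * (2 * L) := by rw [mul_pow, ht2]
  have hbK : (γ * t) ^ 2 ≤ K * L := by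
    rw [hb2, hKdef]
    have hγsq : γ ^ 2 ≤ (Real.sqrt r + 1) ^ 2 := by nlinarith [Real.sqrt_nonneg r]
    nlinarith [mul_le_mul_of_nonneg_right hγsq hL0.le]
  have hb1 : 1 ≤ γ * t := by
    have hrs : r ≤ γ ^ 2 := by nlinarith [Real.sq_sqrt hr.le, Real.sqrt_nonneg r]
    have h2rl : 1 ≤ 2 * r * L := by
      rw [div_le_iff₀ (by positivity : (0:ℝ) < 2 * r)] at hL2
      linarith
    have h1 : 1 ≤ (γ * t) ^ 2 := by
      rw [hb2]
      linarith [mul_le_mul_of_nonneg_right hrs hL0.le]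
    exact one_le_of_one_le_sq hb0 h1
  have ha0 : 0 < s * γ * t := mul_pos (mul_pos hs0 hγ0) ht0
  have hab : |s * γ * t - γ * t| = |s - 1| * (γ * t) := by
    rw [show s * γ * t - γ * t = (s - 1) * (γ * t) from by ring, abs_mul,
      abs_of_pos hb0]
  have hba : |(γ * t) ^ 2 - (s * γ * t) ^ 2| = |s ^ 2 - 1| * (γ * t) ^ 2 := by
    rw [show (γ * t) ^ 2 - (s * γ * t) ^ 2 = (1 - s ^ 2) * (γ * t) ^ 2 from by ring,
      abs_mul, abs_of_nonneg (sq_nonneg (γ * t)), abs_sub_comm]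
  have hprod : |s * γ * t - γ * t| * (γ * t) ≤ 2 * η * (K * L) := by
    rw [hab, mul_assoc, ← sq]
    calc |s - 1| * (γ * t) ^ 2 ≤ 2 * η * (γ * t) ^ 2 :=
          mul_le_mul_of_nonneg_right hs1d (sq_nonneg _)
      _ ≤ 2 * η * (K * L) := mul_le_mul_of_nonneg_left hbK (by linarith)
  have hKu : η * L * K < 1 := by
    have h3 : η * L < 1 / K := lt_of_lt_of_le hu hεK
    rw [lt_div_iff₀ hKpos] at h3
    linarith
  have hexp : |(γ * t) ^ 2 - (s * γ * t) ^ 2| / 2 ≤ 1 := by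
    rw [hba]
    have h1 : |s ^ 2 - 1| * (γ * t) ^ 2 ≤ 2 * η * (K * L) := by
      calc |s ^ 2 - 1| * (γ * t) ^ 2 ≤ 2 * η * (γ * t) ^ 2 :=
            mul_le_mul_of_nonneg_right hs2d (sq_nonneg _)
        _ ≤ 2 * η * (K * L) := mul_le_mul_of_nonneg_left hbK (by linarith)
    linarith
  calc |normalTail (s * γ * t) / normalTail (γ * t) - 1|
      ≤ |s * γ * t - γ * t| * (γ * t) * Real.exp 2 *
        Real.exp (|(γ * t) ^ 2 - (s * γ * t) ^ 2| / 2) := ratio_bound ha0 hb1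
    _ ≤ (2 * η * (K * L)) * Real.exp 2 * Real.exp 1 := by
        gcongr
    _ = (η * L) * (2 * K * Real.exp 3) := by
        rw [show (3 : ℝ) = 2 + 1 from by norm_num, Real.exp_add]
        ring
    _ < ε * (2 * K * Real.exp 3) := mul_lt_mul_of_pos_right hu (by positivity)
    _ ≤ (δ / (2 * K * Real.exp 3)) * (2 * K * Real.exp 3) :=
        mul_le_mul_of_nonneg_right hεδ (by positivity)
    _ = δ := div_mul_cancel₀ _ (by positivity)
end
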